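/- arXiv:1712.00350 — 2 statements merged into one kernel-verified Lean document; each statement's English description precedes it below -/
import Mathlib

section
/- Testing weak optimality of x = 0 for interval LPs of the form min cᵀx s.t. Ax = 0, x ≥ 0 is equivalent to testing weak feasibility of the interval inequality system Aᵀy ≤ c with free variables y: x = 0 is weakly optimal iff the interval system {Aᵀy ≤ c : A ∈ 𝐀, c ∈ 𝐜} is weakly feasible. -/
open Matrix

section Farkas

variable {E : Type*} [AddCommGroup E] [Module ℝ E]

/-- Carathéodory-type reduction: any nonnegative combination can be rewritten as a
nonnegative combination supported on a linearly independent subfamily. -/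
lemma carath_aux {ι : Type*} [Fintype ι] [DecidableEq ι] (g : ι → E) (x : E) (s : Finset ι) :
    ∀ lam : ι → ℝ, 0 ≤ lam → (∀ i ∉ s, lam i = 0) → ∑ i, lam i • g i = x →
    ∃ (t : Finset ι) (mu : ι → ℝ), LinearIndependent ℝ (fun i : t => g i) ∧
      0 ≤ mu ∧ (∀ i ∉ t, mu i = 0) ∧ ∑ i, mu i • g i = x := by
  classical
  induction s using Finset.strongInduction with
  | _ s ih =>
  intro lam h0 hsupp hsum
  by_cases hli : LinearIndependent ℝ (fun i : s => g i)
  · exact ⟨s, lam, hli, h0, hsupp, hsum⟩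
  · obtain ⟨mu0, hmu0sum, i₁, hi₁⟩ := Fintype.not_linearIndependent_iff.mp hli
    have key : ∀ nu : ι → ℝ, (∀ i ∉ s, nu i = 0) → (∑ i, nu i • g i = 0) →
        (∃ i, 0 < nu i) →
        ∃ (t : Finset ι) (mu : ι → ℝ), LinearIndependent ℝ (fun i : t => g i) ∧
          0 ≤ mu ∧ (∀ i ∉ t, mu i = 0) ∧ ∑ i, mu i • g i = x := by
      rintro nu hnusupp hnusum ⟨iw, hiw⟩
      have hiws : iw ∈ s := by
        by_contra hc; rw [hnusupp iw hc] at hiw; exact lt_irrefl 0 hiw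
      set P : Finset ι := s.filter (fun i => 0 < nu i) with hP
      have hPne : P.Nonempty := ⟨iw, Finset.mem_filter.mpr ⟨hiws, hiw⟩⟩
      obtain ⟨i₀, hi₀P, hmin⟩ := P.exists_min_image (fun i => lam i / nu i) hPne
      have hi₀s : i₀ ∈ s := (Finset.mem_filter.mp hi₀P).1
      have hnu₀ : 0 < nu i₀ := (Finset.mem_filter.mp hi₀P).2
      set tv : ℝ := lam i₀ / nu i₀ with htv
      have htv0 : 0 ≤ tv := div_nonneg (h0 i₀) hnu₀.le
      set lam' : ι → ℝ := fun i => lam i - tv * nu i with hlam'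
      have h0' : 0 ≤ lam' := by
        intro i
        simp only [hlam', Pi.zero_apply]
        rcases le_or_gt (nu i) 0 with hni | hni
        · have h1 := mul_nonpos_of_nonneg_of_nonpos htv0 hni
          have h2 : (0:ℝ) ≤ lam i := h0 i
          linarith
        · have hiP : i ∈ P := Finset.mem_filter.mpr ⟨by
            by_contra hc; rw [hnusupp i hc] at hni; exact lt_irrefl 0 hni, hni⟩
          have hd := (le_div_iff₀ hni).mp (hmin i hiP)
          linarith
      have hsupp' : ∀ i ∉ s.erase i₀, lam' i = 0 := by
        intro i hi
        rw [Finset.mem_erase] at hi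
        push_neg at hi
        by_cases hii : i = i₀
        · subst hii
          simp only [hlam', htv]
          field_simp
          ring
        · have his : i ∉ s := hi hii
          simp only [hlam', hsupp i his, hnusupp i his, mul_zero, sub_zero]
      have hsum' : ∑ i, lam' i • g i = x := by
        have : ∑ i, lam' i • g i = ∑ i, lam i • g i - tv • ∑ i, nu i • g i := by
          rw [Finset.smul_sum, ← Finset.sum_sub_distrib]
          refine Finset.sum_congr rfl fun i _ => ?_
          simp [hlam', sub_smul, mul_smul]
        rw [this, hsum, hnusum, smul_zero, sub_zero]
      exact ih (s.erase i₀) (Finset.erase_ssubset hi₀s) lam' h0' hsupp' hsum'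
    set nu : ι → ℝ := fun i => if h : i ∈ s then mu0 ⟨i, h⟩ else 0 with hnu
    have hnusupp : ∀ i ∉ s, nu i = 0 := fun i hi => dif_neg hi
    have hnusum : ∑ i, nu i • g i = 0 := by
      rw [← Finset.sum_subset (Finset.subset_univ s)
        (fun i _ hi => by rw [hnusupp i hi, zero_smul])]
      rw [← Finset.sum_coe_sort s (fun i => nu i • g i)]
      rw [← hmu0sum]
      refine Finset.sum_congr rfl fun i _ => ?_
      simp [hnu, i.2]
    have hnu₁ : nu ↑i₁ ≠ 0 := by simpa [hnu, i₁.2] using hi₁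
    by_cases hpos : ∃ i, 0 < nu i
    · exact key nu hnusupp hnusum hpos
    · refine key (-nu) (fun i hi => by simp [hnusupp i hi]) ?_ ?_
      · simp only [Pi.neg_apply, neg_smul, Finset.sum_neg_distrib, hnusum, neg_zero]
      · push_neg at hpos
        refine ⟨↑i₁, ?_⟩
        have := hpos ↑i₁
        simp only [Pi.neg_apply]
        cases lt_or_eq_of_le this with
        | inl h => linarith
        | inr h => exact absurd h hnu₁

/-- The conical hull of finitely many vectors in `Fin n → ℝ` is closed. -/
lemma isClosed_finite_cone {n : ℕ} {ι : Type*} [Fintype ι] (g : ι → (Fin n → ℝ)) :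
    IsClosed {x : Fin n → ℝ | ∃ lam : ι → ℝ, 0 ≤ lam ∧ ∑ i, lam i • g i = x} := by
  classical
  have hset : {x : Fin n → ℝ | ∃ lam : ι → ℝ, 0 ≤ lam ∧ ∑ i, lam i • g i = x} =
      ⋃ (t : Finset ι), if LinearIndependent ℝ (fun i : t => g i)
        then {x : Fin n → ℝ | ∃ lam : ι → ℝ, 0 ≤ lam ∧ (∀ i ∉ t, lam i = 0) ∧
          ∑ i, lam i • g i = x}
        else ∅ := by
    ext x
    simp only [Set.mem_setOf_eq, Set.mem_iUnion]
    constructor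
    · rintro ⟨lam, h0, hsum⟩
      obtain ⟨t, mu, hli, h0', hsupp, hsum'⟩ :=
        carath_aux g x Finset.univ lam h0 (by simp) hsum
      exact ⟨t, by rw [if_pos hli]; exact ⟨mu, h0', hsupp, hsum'⟩⟩
    · rintro ⟨t, hx⟩
      split_ifs at hx with hli
      · obtain ⟨lam, h0, _, hsum⟩ := hx
        exact ⟨lam, h0, hsum⟩
      · exact absurd hx (Set.notMem_empty x)
  rw [hset]
  apply isClosed_iUnion_of_finite
  intro t
  split_ifs with hli
  · let T : (↥t → ℝ) →ₗ[ℝ] (Fin n → ℝ) :=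
      { toFun := fun f => ∑ i : t, f i • g ↑i
        map_add' := fun f h => by
          simp [add_smul, Finset.sum_add_distrib]
        map_smul' := fun c f => by
          simp only [Pi.smul_apply, smul_eq_mul, mul_smul, RingHom.id_apply]
          rw [← Finset.smul_sum] }
    have hker : LinearMap.ker T = ⊥ := by
      rw [LinearMap.ker_eq_bot']
      intro f hf
      funext i
      exact Fintype.linearIndependent_iff.mp hli f hf i
    have hce := LinearMap.isClosedEmbedding_of_injective (𝕜 := ℝ) hker
    have himg : {x : Fin n → ℝ | ∃ lam : ι → ℝ, 0 ≤ lam ∧ (∀ i ∉ t, lam i = 0) ∧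
        ∑ i, lam i • g i = x} = T '' (Set.Ici 0) := by
      ext x
      simp only [Set.mem_setOf_eq, Set.mem_image, Set.mem_Ici]
      constructor
      · rintro ⟨lam, h0, hsupp, hsum⟩
        refine ⟨fun i => lam ↑i, fun i => h0 ↑i, ?_⟩
        show ∑ i : t, lam ↑i • g ↑i = x
        rw [Finset.sum_coe_sort t (fun i => lam i • g i)]
        rw [Finset.sum_subset (Finset.subset_univ t)
          (fun i _ hi => by rw [hsupp i hi, zero_smul])]
        exact hsum
      · rintro ⟨f, h0, hTf⟩
        refine ⟨fun i => if h : i ∈ t then f ⟨i, h⟩ else 0,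
          fun i => by dsimp only; split_ifs with h; exacts [h0 _, le_refl 0],
          fun i hi => dif_neg hi, ?_⟩
        rw [← Finset.sum_subset (Finset.subset_univ t)
          (fun i _ hi => by simp [dif_neg hi])]
        rw [← Finset.sum_coe_sort t (fun i => (if h : i ∈ t then f ⟨i, h⟩ else 0) • g i)]
        rw [← hTf]
        exact Finset.sum_congr rfl fun i _ => by simp [i.2]
    rw [himg]
    exact hce.isClosedMap _ isClosed_Ici
  · exact isClosed_empty

/-- Farkas-type lemma: if `c ⬝ᵥ x ≥ 0` for every `x ≥ 0` with `A x = 0`, then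
there exists `y` with `Aᵀ y ≤ c`. -/
lemma farkas_dual {k n : ℕ} (A : Matrix (Fin k) (Fin n) ℝ) (c : Fin n → ℝ)
    (h : ∀ x : Fin n → ℝ, 0 ≤ x → A.mulVec x = 0 → 0 ≤ c ⬝ᵥ x) :
    ∃ y : Fin k → ℝ, A.vecMul y ≤ c := by
  classical
  set g : ((Fin k ⊕ Fin k) ⊕ Fin n) → (Fin n → ℝ) :=
    Sum.elim (Sum.elim (fun i => A i) (fun i => -A i)) (fun j => Pi.single j 1) with hg
  set S : Set (Fin n → ℝ) := {x | ∃ lam : ((Fin k ⊕ Fin k) ⊕ Fin n) → ℝ,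
    0 ≤ lam ∧ ∑ i, lam i • g i = x} with hS
  have hgen : ∀ i0, g i0 ∈ S := by
    intro i0
    refine ⟨fun i => if i = i0 then 1 else 0,
      fun i => by dsimp only; split_ifs <;> norm_num, ?_⟩
    simp [ite_smul]
  have hsmul : ∀ (r : ℝ), 0 ≤ r → ∀ x ∈ S, r • x ∈ S := by
    rintro r hr x ⟨lam, h0, hsum⟩
    refine ⟨r • lam, fun i => mul_nonneg hr (h0 i), ?_⟩
    rw [← hsum, Finset.smul_sum]
    exact Finset.sum_congr rfl fun i _ => by
      simp [Pi.smul_apply, smul_eq_mul, mul_smul]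
  have hzero : (0 : Fin n → ℝ) ∈ S := ⟨0, le_refl 0, by simp⟩
  have hSconv : Convex ℝ S := by
    rintro x ⟨lam₁, h01, hsum1⟩ y ⟨lam₂, h02, hsum2⟩ a b ha hb _
    refine ⟨a • lam₁ + b • lam₂,
      fun i => add_nonneg (mul_nonneg ha (h01 i)) (mul_nonneg hb (h02 i)), ?_⟩
    rw [← hsum1, ← hsum2, Finset.smul_sum, Finset.smul_sum, ← Finset.sum_add_distrib]
    exact Finset.sum_congr rfl fun i _ => by simp [add_smul, mul_smul]
  have hSclosed : IsClosed S := isClosed_finite_cone g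
  have hcS : c ∈ S := by
    by_contra hc
    obtain ⟨f, u, hfS, hfc⟩ := geometric_hahn_banach_closed_point hSconv hSclosed hc
    have hu : 0 < u := by simpa using hfS 0 hzero
    have hle : ∀ a ∈ S, f a ≤ 0 := by
      intro a ha
      by_contra hfa
      push_neg at hfa
      have h2 : ((u / f a + 1) • a) ∈ S :=
        hsmul _ (by positivity) a ha
      have h3 := hfS _ h2
      rw [_root_.map_smul] at h3
      simp only [smul_eq_mul] at h3
      rw [div_add_one hfa.ne', div_mul_cancel₀ _ hfa.ne'] at h3
      linarith
    -- representation of f as a dot product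
    have hrep : ∀ v : Fin n → ℝ, f v = ∑ j, v j * f (Pi.single j 1) := by
      intro v
      have hv : v = ∑ j, Pi.single j (v j) := by
        rw [Finset.univ_sum_single]
      conv_lhs => rw [hv]
      rw [map_sum]
      refine Finset.sum_congr rfl fun j _ => ?_
      have hsingle : Pi.single j (v j) = v j • (Pi.single j (1 : ℝ) : Fin n → ℝ) := by
        funext j'
        by_cases hj : j' = j <;> simp [Pi.single_apply, hj]
      rw [hsingle, _root_.map_smul, smul_eq_mul]
    set z : Fin n → ℝ := fun j => f (Pi.single j (1:ℝ) : Fin n → ℝ) with hz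
    have hzle : ∀ j, z j ≤ 0 := fun j => hle _ (hgen (Sum.inr j))
    have hAz : ∀ i, A i ⬝ᵥ z = 0 := by
      intro i
      have h1 : f (A i) ≤ 0 := hle _ (hgen (Sum.inl (Sum.inl i)))
      have h2 : f (-(A i)) ≤ 0 := hle _ (hgen (Sum.inl (Sum.inr i)))
      rw [map_neg] at h2
      have : f (A i) = 0 := le_antisymm h1 (by linarith)
      rw [← this, hrep (A i)]
      rfl
    have hx0 : (0 : Fin n → ℝ) ≤ -z := fun j => by
      simpa using hzle j
    have hmv : A.mulVec (-z) = 0 := by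
      funext i
      show A i ⬝ᵥ (-z) = 0
      rw [dotProduct_neg, hAz i, neg_zero]
    have hcx := h (-z) hx0 hmv
    have hfcz : f c = ∑ j, c j * z j := hrep c
    have : c ⬝ᵥ (-z) = -(f c) := by
      rw [dotProduct_neg, hfcz]
      rfl
    rw [this] at hcx
    have : 0 < f c := lt_trans hu hfc
    linarith
  -- extract y from membership
  obtain ⟨lam, h0, hsum⟩ := hcS
  rw [Fintype.sum_sum_type, Fintype.sum_sum_type] at hsum
  set y : Fin k → ℝ := fun i => lam (Sum.inl (Sum.inl i)) - lam (Sum.inl (Sum.inr i)) with hy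
  refine ⟨y, fun j => ?_⟩
  have hsumj := congrFun hsum j
  simp only [Finset.sum_apply, Pi.add_apply, Pi.smul_apply, Pi.neg_apply, smul_eq_mul,
    Pi.single_apply, mul_ite, mul_one, mul_zero, Sum.elim_inl, Sum.elim_inr, hg] at hsumj
  rw [Finset.sum_ite_eq Finset.univ j (fun j' => lam (Sum.inr j'))] at hsumj
  simp only [Finset.mem_univ, if_true] at hsumj
  have hvm : A.vecMul y j = ∑ i, y i * A i j := by
    simp [Matrix.vecMul, dotProduct]
  rw [hvm]
  have hnn : 0 ≤ lam (Sum.inr j) := h0 _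
  have hexp : ∑ i, y i * A i j =
      ∑ i, lam (Sum.inl (Sum.inl i)) * A i j - ∑ i, lam (Sum.inl (Sum.inr i)) * A i j := by
    rw [← Finset.sum_sub_distrib]
    exact Finset.sum_congr rfl fun i _ => by ring
  rw [hexp]
  simp only [mul_neg, Finset.sum_neg_distrib] at hsumj
  linarith

end Farkas

/-- Weak optimality of x = 0 for min cᵀx s.t. Ax = 0, x ≥ 0 over interval data
is equivalent to weak feasibility of the interval system Aᵀy ≤ c. -/
theorem zero_weakly_optimal_iff_weakly_feasible {k n : ℕ}
    (Alo Ahi : Matrix (Fin k) (Fin n) ℝ) (clo chi : Fin n → ℝ) :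
    (∃ (A : Matrix (Fin k) (Fin n) ℝ) (c : Fin n → ℝ),
      (∀ i j, Alo i j ≤ A i j ∧ A i j ≤ Ahi i j) ∧ (∀ j, clo j ≤ c j ∧ c j ≤ chi j) ∧
      ((0 : Fin n → ℝ) ≤ 0 ∧ A.mulVec 0 = 0) ∧
      (∀ x : Fin n → ℝ, 0 ≤ x → A.mulVec x = 0 →
        c ⬝ᵥ (0 : Fin n → ℝ) ≤ c ⬝ᵥ x)) ↔
    (∃ (A : Matrix (Fin k) (Fin n) ℝ) (c : Fin n → ℝ) (y : Fin k → ℝ),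
      (∀ i j, Alo i j ≤ A i j ∧ A i j ≤ Ahi i j) ∧ (∀ j, clo j ≤ c j ∧ c j ≤ chi j) ∧
      A.vecMul y ≤ c) := by
  constructor
  · rintro ⟨A, c, hA, hc, -, hopt⟩
    obtain ⟨y, hy⟩ := farkas_dual A c (fun x hx hAx => by
      simpa using hopt x hx hAx)
    exact ⟨A, c, y, hA, hc, hy⟩
  · rintro ⟨A, c, y, hA, hc, hy⟩
    refine ⟨A, c, hA, hc, ⟨le_refl 0, Matrix.mulVec_zero A⟩, fun x hx hAx => ?_⟩
    rw [dotProduct_zero]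
    have h1 : A.vecMul y ⬝ᵥ x ≤ c ⬝ᵥ x := by
      refine Finset.sum_le_sum fun j _ => ?_
      exact mul_le_mul_of_nonneg_right (hy j) (hx j)
    have h2 : A.vecMul y ⬝ᵥ x = 0 := by
      rw [← Matrix.dotProduct_mulVec, hAx, dotProduct_zero]
    linarith
end

section
/- Let the interval LP be min cᶠᵀxᶠ + cⁿᵀxⁿ subject to Bᶠxᶠ + Bⁿxⁿ ≥ b, xⁿ ≥ 0, with Bᶠ ∈ 𝐁ᶠ, Bⁿ ∈ 𝐁ⁿ, b ∈ 𝐛, cᶠ ∈ 𝐜ᶠ, cⁿ ∈ 𝐜ⁿ (inequality constraints only). If x = (xᶠ, xⁿ) is weakly optimal, then x is weakly feasible and there exist matrices B'ᶠ, B'ⁿ, vector b' and yⁿ ≥ 0 with B'ᶠᵢ ∈ yⁿᵢ·𝐁ᶠᵢ, B'ⁿᵢ ∈ yⁿᵢ·𝐁ⁿᵢ, b'ᵢ ∈ yⁿᵢ·𝐛ᵢ for each row i, satisfying B'ᶠxᶠ + B'ⁿxⁿ = b', (eᵀB'ᶠ)ᵀ ∈ 𝐜ᶠ, (eᵀB'ⁿ)ᵢ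 ∈ 𝐜ⁿᵢ whenever xⁿᵢ > 0, and (eᵀB'ⁿ)ᵢ ≤ c̄ⁿᵢ whenever xⁿᵢ = 0. -/
open Matrix

lemma farkas_fin {α : Type*} [Fintype α] :
    ∀ (k : ℕ) (a : Fin k → α → ℝ) (c : α → ℝ),
      (∃ t : Fin k → ℝ, (∀ i, 0 ≤ t i) ∧ c = ∑ i, t i • a i) ∨
      (∃ x : α → ℝ, (∀ i, 0 ≤ a i ⬝ᵥ x) ∧ c ⬝ᵥ x < 0) := by
  intro k
  induction k with
  | zero =>
    intro a c
    by_cases hc : c = 0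
    · exact Or.inl ⟨0, fun i => le_refl 0, by simp [hc]⟩
    · refine Or.inr ⟨-c, fun i => i.elim0, ?_⟩
      have h0 : 0 ≤ c ⬝ᵥ c := Finset.sum_nonneg fun i _ => mul_self_nonneg _
      have hne : c ⬝ᵥ c ≠ 0 := fun h => hc ((dotProduct_self_eq_zero (v := c)).mp h)
      have : 0 < c ⬝ᵥ c := lt_of_le_of_ne h0 (Ne.symm hne)
      simpa [dotProduct_neg] using neg_lt_zero.mpr this
  | succ k ih =>
    intro a c
    set aL : α → ℝ := a (Fin.last k) with haL
    rcases ih (fun i => a i.castSucc) c with ⟨t, ht, hc⟩ | ⟨x, hx, hcx⟩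
    · refine Or.inl ⟨Fin.snoc t 0, ?_, ?_⟩
      · intro i
        refine Fin.lastCases ?_ ?_ i
        · simp
        · intro j; simpa using ht j
      · rw [Fin.sum_univ_castSucc]
        simpa using hc
    · by_cases hp : 0 ≤ aL ⬝ᵥ x
      · refine Or.inr ⟨x, ?_, hcx⟩
        intro i
        refine Fin.lastCases ?_ ?_ i
        · exact hp
        · intro j; exact hx j
      · push_neg at hp
        have hpne : aL ⬝ᵥ x ≠ 0 := ne_of_lt hp
        set p : ℝ := aL ⬝ᵥ x with hpdef
        -- projected vectors
        set proj : (α → ℝ) → (α → ℝ) := fun v => v - (v ⬝ᵥ x / p) • aL with hproj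
        rcases ih (fun i => proj (a i.castSucc)) (proj c) with ⟨t, ht, hc⟩ | ⟨z, hz, hcz⟩
        · -- cone case
          set μ : ℝ := c ⬝ᵥ x / p - ∑ i, t i * ((a i.castSucc) ⬝ᵥ x / p) with hμ
          have hμ0 : 0 ≤ μ := by
            have h1 : 0 ≤ c ⬝ᵥ x / p := le_of_lt (div_pos_of_neg_of_neg hcx hp)
            have h2 : ∑ i, t i * ((a i.castSucc) ⬝ᵥ x / p) ≤ 0 := by
              apply Finset.sum_nonpos
              intro i _
              exact mul_nonpos_of_nonneg_of_nonpos (ht i) (div_nonpos_of_nonneg_of_nonpos (hx i) hp.le)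
            simpa [hμ] using sub_nonneg.mpr (h2.trans h1)
          refine Or.inl ⟨Fin.snoc t μ, ?_, ?_⟩
          · intro i
            refine Fin.lastCases ?_ ?_ i
            · simpa using hμ0
            · intro j; simpa using ht j
          · rw [Fin.sum_univ_castSucc]
            simp only [Fin.snoc_castSucc, Fin.snoc_last]
            have hc' : c = ∑ i, t i • (proj (a i.castSucc)) + (c ⬝ᵥ x / p) • aL := by
              rw [← hc]; simp [hproj]
            rw [hc']
            simp only [hproj, hμ, smul_sub, Finset.sum_sub_distrib, smul_smul, sub_smul,
              Finset.sum_smul]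
            abel
        · -- separation case
          refine Or.inr ⟨z - (aL ⬝ᵥ z / p) • x, ?_, ?_⟩
          · intro i
            refine Fin.lastCases ?_ ?_ i
            · have : aL ⬝ᵥ (z - (aL ⬝ᵥ z / p) • x) = 0 := by
                rw [dotProduct_sub, dotProduct_smul, smul_eq_mul, hpdef,
                  div_mul_cancel₀ _ hpne, sub_self]
              rw [this]
            · intro j
              have := hz j
              have heq : (a j.castSucc) ⬝ᵥ (z - (aL ⬝ᵥ z / p) • x)
                  = (proj (a j.castSucc)) ⬝ᵥ z := by
                simp [hproj, dotProduct_sub, sub_dotProduct, dotProduct_smul, smul_dotProduct,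
                  smul_eq_mul]
                ring
              rw [heq]; exact this
          · have heq : c ⬝ᵥ (z - (aL ⬝ᵥ z / p) • x) = (proj c) ⬝ᵥ z := by
              simp [hproj, dotProduct_sub, sub_dotProduct, dotProduct_smul, smul_dotProduct,
                smul_eq_mul]
              ring
            rw [heq]; exact hcz

lemma farkas_cor {α ι : Type*} [Fintype α] [Fintype ι] (a : ι → α → ℝ) (c : α → ℝ)
    (h : ∀ x : α → ℝ, (∀ i, 0 ≤ a i ⬝ᵥ x) → 0 ≤ c ⬝ᵥ x) :
    ∃ t : ι → ℝ, (∀ i, 0 ≤ t i) ∧ c = ∑ i, t i • a i := by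
  classical
  set e := Fintype.equivFin ι
  rcases farkas_fin (Fintype.card ι) (fun i => a (e.symm i)) c with ⟨t, ht, hc⟩ | ⟨x, hx, hcx⟩
  · refine ⟨fun i => t (e i), fun i => ht _, ?_⟩
    rw [hc]
    rw [← Equiv.sum_comp e.symm (fun i => t (e i) • a i)]
    simp
  · exact absurd (h x (fun i => by simpa using hx (e i))) (not_le.mpr hcx)

lemma exists_eps {ι : Type*} [Fintype ι] (s g : ι → ℝ) (hs : ∀ k, 0 ≤ s k)
    (h : ∀ k, s k = 0 → 0 ≤ g k) : ∃ ε : ℝ, 0 < ε ∧ ∀ k, 0 ≤ s k + ε * g k := by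
  classical
  have hφpos : ∀ k, 0 < (if 0 ≤ g k then 1 else s k / (-g k)) := by
    intro k
    by_cases hg : 0 ≤ g k
    · simp [hg]
    · push_neg at hg
      have hsk : 0 < s k := lt_of_le_of_ne (hs k) (fun e => absurd (h k e.symm) (not_le.mpr hg))
      rw [if_neg (not_le.mpr hg)]
      exact div_pos hsk (neg_pos.mpr hg)
  obtain ⟨E, hEne, hmemE⟩ : ∃ E : Finset ℝ, E.Nonempty ∧
      ((1:ℝ) ∈ E ∧ ∀ k, (if 0 ≤ g k then 1 else s k / (-g k)) ∈ E) ∧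
      ∀ x ∈ E, (0:ℝ) < x := by
    refine ⟨insert 1 (Finset.image (fun k => if 0 ≤ g k then 1 else s k / (-g k)) Finset.univ),
      ⟨1, Finset.mem_insert_self _ _⟩, ⟨Finset.mem_insert_self _ _, fun k =>
        Finset.mem_insert_of_mem (Finset.mem_image_of_mem _ (Finset.mem_univ k))⟩, ?_⟩
    intro x hx
    rcases Finset.mem_insert.mp hx with h1 | h2
    · rw [h1]; norm_num
    · rcases Finset.mem_image.mp h2 with ⟨k, _, hk⟩
      rw [← hk]; exact hφpos k
  obtain ⟨hmem, hpos⟩ := hmemE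
  have hmin_pos : 0 < E.min' hEne := hpos _ (E.min'_mem hEne)
  refine ⟨E.min' hEne, hmin_pos, ?_⟩
  intro k
  have hle : E.min' hEne ≤ (if 0 ≤ g k then 1 else s k / (-g k)) :=
    Finset.min'_le _ _ (hmem.2 k)
  by_cases hg : 0 ≤ g k
  · have := mul_nonneg hmin_pos.le hg
    linarith [hs k]
  · push_neg at hg
    rw [if_neg (not_le.mpr hg)] at hle
    have : E.min' hEne * (-g k) ≤ s k := by
      rw [← le_div_iff₀ (neg_pos.mpr hg)]
      exact hle
    nlinarith

open Sum in
lemma split_dot {m n : ℕ} (u : Fin m → ℝ) (v : Fin n → ℝ) (x : (Fin m ⊕ Fin n) → ℝ) :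
    Sum.elim u v ⬝ᵥ x = u ⬝ᵥ (fun j => x (inl j)) + v ⬝ᵥ (fun j => x (inr j)) := by
  simp [dotProduct, Fintype.sum_sum_type]

open Sum


/-- Forward direction of Theorem 5: weak optimality implies weak feasibility plus
solvability of the scaled testing system. -/
theorem weakly_optimal_implies_testing_system {m n ℓ : ℕ}
    (Bflo Bfhi : Matrix (Fin ℓ) (Fin m) ℝ) (Bnlo Bnhi : Matrix (Fin ℓ) (Fin n) ℝ)
    (blo bhi : Fin ℓ → ℝ) (cflo cfhi : Fin m → ℝ) (cnlo cnhi : Fin n → ℝ)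
    (xf : Fin m → ℝ) (xn : Fin n → ℝ)
    -- weak optimality of (xf, xn):
    (hopt : ∃ (Bf : Matrix (Fin ℓ) (Fin m) ℝ) (Bn : Matrix (Fin ℓ) (Fin n) ℝ)
        (b : Fin ℓ → ℝ) (cf : Fin m → ℝ) (cn : Fin n → ℝ),
      (∀ i j, Bflo i j ≤ Bf i j ∧ Bf i j ≤ Bfhi i j) ∧
      (∀ i j, Bnlo i j ≤ Bn i j ∧ Bn i j ≤ Bnhi i j) ∧
      (∀ i, blo i ≤ b i ∧ b i ≤ bhi i) ∧
      (∀ j, cflo j ≤ cf j ∧ cf j ≤ cfhi j) ∧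
      (∀ j, cnlo j ≤ cn j ∧ cn j ≤ cnhi j) ∧
      (b ≤ Bf.mulVec xf + Bn.mulVec xn ∧ 0 ≤ xn) ∧
      (∀ (xf' : Fin m → ℝ) (xn' : Fin n → ℝ),
        b ≤ Bf.mulVec xf' + Bn.mulVec xn' → 0 ≤ xn' →
        cf ⬝ᵥ xf + cn ⬝ᵥ xn ≤ cf ⬝ᵥ xf' + cn ⬝ᵥ xn')) :
    -- weak feasibility:
    (∃ (Bf : Matrix (Fin ℓ) (Fin m) ℝ) (Bn : Matrix (Fin ℓ) (Fin n) ℝ) (b : Fin ℓ → ℝ),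
      (∀ i j, Bflo i j ≤ Bf i j ∧ Bf i j ≤ Bfhi i j) ∧
      (∀ i j, Bnlo i j ≤ Bn i j ∧ Bn i j ≤ Bnhi i j) ∧
      (∀ i, blo i ≤ b i ∧ b i ≤ bhi i) ∧
      b ≤ Bf.mulVec xf + Bn.mulVec xn ∧ 0 ≤ xn) ∧
    -- solvability of the scaled testing system:
    (∃ (Bf' : Matrix (Fin ℓ) (Fin m) ℝ) (Bn' : Matrix (Fin ℓ) (Fin n) ℝ)
        (b' : Fin ℓ → ℝ) (yn : Fin ℓ → ℝ),
      0 ≤ yn ∧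
      (∀ i j, yn i * Bflo i j ≤ Bf' i j ∧ Bf' i j ≤ yn i * Bfhi i j) ∧
      (∀ i j, yn i * Bnlo i j ≤ Bn' i j ∧ Bn' i j ≤ yn i * Bnhi i j) ∧
      (∀ i, yn i * blo i ≤ b' i ∧ b' i ≤ yn i * bhi i) ∧
      Bf'.mulVec xf + Bn'.mulVec xn = b' ∧
      (∀ j, cflo j ≤ ∑ i, Bf' i j ∧ ∑ i, Bf' i j ≤ cfhi j) ∧
      (∀ j, 0 < xn j → cnlo j ≤ ∑ i, Bn' i j ∧ ∑ i, Bn' i j ≤ cnhi j) ∧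
      (∀ j, xn j = 0 → ∑ i, Bn' i j ≤ cnhi j)) := by
  classical
  obtain ⟨Bf, Bn, b, cf, cn, hBf, hBn, hb, hcf, hcn, ⟨hfeas, hxn⟩, hoptim⟩ := hopt
  refine ⟨⟨Bf, Bn, b, hBf, hBn, hb, hfeas, hxn⟩, ?_⟩
  -- tightness predicates
  set Tl : Fin ℓ → Prop := fun i => (Bf.mulVec xf + Bn.mulVec xn) i = b i with hTl
  set Tn : Fin n → Prop := fun j => xn j = 0 with hTn
  -- rows as vectors on Fin m ⊕ Fin n
  set row : Fin ℓ → (Fin m ⊕ Fin n) → ℝ := fun i => Sum.elim (Bf i) (Bn i) with hrow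
  set unit : Fin n → (Fin m ⊕ Fin n) → ℝ := fun j => Sum.elim 0 (Pi.single j 1) with hunit
  set a : (Fin ℓ ⊕ Fin n) → (Fin m ⊕ Fin n) → ℝ :=
    Sum.elim (fun i => if Tl i then row i else 0) (fun j => if Tn j then unit j else 0) with ha
  set c : (Fin m ⊕ Fin n) → ℝ := Sum.elim cf cn with hc
  -- dot product computations
  have hrowdot : ∀ (i : Fin ℓ) (x : (Fin m ⊕ Fin n) → ℝ),
      row i ⬝ᵥ x = Bf.mulVec (fun j => x (inl j)) i + Bn.mulVec (fun j => x (inr j)) i := by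
    intro i x
    simp [hrow, split_dot, Matrix.mulVec, dotProduct]
  have hunitdot : ∀ (j : Fin n) (x : (Fin m ⊕ Fin n) → ℝ),
      unit j ⬝ᵥ x = x (inr j) := by
    intro j x
    simp [hunit, split_dot]
  have hcdot : ∀ (x : (Fin m ⊕ Fin n) → ℝ),
      c ⬝ᵥ x = cf ⬝ᵥ (fun j => x (inl j)) + cn ⬝ᵥ (fun j => x (inr j)) := by
    intro x; simp [hc, split_dot]
  -- Farkas hypothesis
  have hfarkas : ∀ x : (Fin m ⊕ Fin n) → ℝ, (∀ k, 0 ≤ a k ⬝ᵥ x) → 0 ≤ c ⬝ᵥ x := by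
    intro x hx
    by_contra hneg
    push_neg at hneg
    set df : Fin m → ℝ := fun j => x (inl j) with hdf
    set dn : Fin n → ℝ := fun j => x (inr j) with hdn
    -- slack and direction derivative over combined constraints
    obtain ⟨ε, hε, hok⟩ := exists_eps
      (Sum.elim (fun i => (Bf.mulVec xf + Bn.mulVec xn) i - b i) (fun j => xn j))
      (Sum.elim (fun i => (Bf.mulVec df + Bn.mulVec dn) i) (fun j => dn j))
      (by
        rintro (i | j)
        · simpa using sub_nonneg.mpr (hfeas i)
        · simpa using hxn j)
      (by
        rintro (i | j) hk
        · have hti : Tl i := by simpa [hTl, sub_eq_zero] using hk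
          have := hx (inl i)
          rw [ha] at this
          simp only [Sum.elim_inl, if_pos hti] at this
          rw [hrowdot] at this
          simpa [hdf, hdn] using this
        · have htj : Tn j := by simpa [hTn] using hk
          have := hx (inr j)
          rw [ha] at this
          simp only [Sum.elim_inr, if_pos htj] at this
          rw [hunitdot] at this
          simpa [hdn] using this)
    -- x + ε d is feasible with smaller objective
    have hfeas' : b ≤ Bf.mulVec (xf + ε • df) + Bn.mulVec (xn + ε • dn) := by
      intro i
      have := hok (inl i)
      simp only [Sum.elim_inl, Pi.add_apply] at this
      simp only [Matrix.mulVec_add, Matrix.mulVec_smul, Pi.add_apply, Pi.smul_apply,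
        smul_eq_mul]
      linarith
    have hxn' : (0 : Fin n → ℝ) ≤ xn + ε • dn := by
      intro j
      have := hok (inr j)
      simp only [Sum.elim_inr] at this
      simp only [Pi.add_apply, Pi.smul_apply, smul_eq_mul, Pi.zero_apply]
      linarith
    have := hoptim (xf + ε • df) (xn + ε • dn) hfeas' hxn'
    rw [dotProduct_add, dotProduct_add, dotProduct_smul, dotProduct_smul] at this
    have hcx : c ⬝ᵥ x = cf ⬝ᵥ df + cn ⬝ᵥ dn := hcdot x
    have : (0:ℝ) ≤ ε * (cf ⬝ᵥ df + cn ⬝ᵥ dn) := by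
      simp only [smul_eq_mul] at this
      linarith
    nlinarith [this, hε, hneg, hcx]
  obtain ⟨t, ht, hct⟩ := farkas_cor a c hfarkas
  -- dual variables
  set y : Fin ℓ → ℝ := fun i => if Tl i then t (inl i) else 0 with hy
  set z : Fin n → ℝ := fun j => if Tn j then t (inr j) else 0 with hz
  have hy0 : ∀ i, 0 ≤ y i := by
    intro i; rw [hy]; dsimp only; split
    · exact ht _
    · exact le_refl 0
  have hz0 : ∀ j, 0 ≤ z j := by
    intro j; rw [hz]; dsimp only; split
    · exact ht _
    · exact le_refl 0
  -- component equations
  have hkey : ∀ k, t k • a k = (Sum.elim y z k) • (Sum.elim row unit k) := by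
    rintro (i | j)
    · rw [ha, hy]; dsimp only [Sum.elim_inl]
      split
      · rfl
      · simp
    · rw [ha, hz]; dsimp only [Sum.elim_inr]
      split
      · rfl
      · simp
  have hct' : c = ∑ k, (Sum.elim y z k) • (Sum.elim row unit k) := by
    rw [hct]; exact Finset.sum_congr rfl fun k _ => hkey k
  have hcf_eq : ∀ j, cf j = ∑ i, y i * Bf i j := by
    intro j
    have := congrFun hct' (inl j)
    simp only [hc, Sum.elim_inl, Finset.sum_apply, Pi.smul_apply, smul_eq_mul] at this
    rw [Fintype.sum_sum_type] at this
    simpa [hrow, hunit] using this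
  have hcn_eq : ∀ j, cn j = (∑ i, y i * Bn i j) + z j := by
    intro j
    have := congrFun hct' (inr j)
    simp only [hc, Sum.elim_inr, Finset.sum_apply, Pi.smul_apply, smul_eq_mul] at this
    rw [Fintype.sum_sum_type] at this
    simp only [Sum.elim_inl, Sum.elim_inr, hrow, hunit] at this
    rw [this]
    congr 1
    rw [Finset.sum_eq_single j]
    · simp
    · intro j' _ hj'
      simp [Pi.single_apply, hj']
    · simp
  -- final witnesses
  refine ⟨fun i j => y i * Bf i j, fun i j => y i * Bn i j, fun i => y i * b i, y, ?_, ?_, ?_, ?_,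
    ?_, ?_, ?_, ?_⟩
  · exact hy0
  · intro i j
    exact ⟨mul_le_mul_of_nonneg_left (hBf i j).1 (hy0 i),
      mul_le_mul_of_nonneg_left (hBf i j).2 (hy0 i)⟩
  · intro i j
    exact ⟨mul_le_mul_of_nonneg_left (hBn i j).1 (hy0 i),
      mul_le_mul_of_nonneg_left (hBn i j).2 (hy0 i)⟩
  · intro i
    exact ⟨mul_le_mul_of_nonneg_left (hb i).1 (hy0 i),
      mul_le_mul_of_nonneg_left (hb i).2 (hy0 i)⟩
  · funext i
    have h1 : Matrix.mulVec (fun i j => y i * Bf i j) xf i = y i * Bf.mulVec xf i := by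
      simp [Matrix.mulVec, dotProduct, Finset.mul_sum, mul_assoc]
    have h2 : Matrix.mulVec (fun i j => y i * Bn i j) xn i = y i * Bn.mulVec xn i := by
      simp [Matrix.mulVec, dotProduct, Finset.mul_sum, mul_assoc]
    simp only [Pi.add_apply, h1, h2, ← mul_add]
    by_cases hti : Tl i
    · have : Bf.mulVec xf i + Bn.mulVec xn i = b i := by simpa [hTl] using hti
      rw [this]
    · have : y i = 0 := by rw [hy]; dsimp only; rw [if_neg hti]
      rw [this]; ring
  · intro j
    rw [← hcf_eq j]
    exact hcf j
  · intro j hj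
    have hzj : z j = 0 := by
      rw [hz]; dsimp only
      rw [if_neg]
      simp only [hTn]
      exact ne_of_gt hj
    have : ∑ i, y i * Bn i j = cn j := by rw [hcn_eq j, hzj]; ring
    rw [this]
    exact hcn j
  · intro j hj
    have : ∑ i, y i * Bn i j = cn j - z j := by rw [hcn_eq j]; ring
    rw [this]
    have := hz0 j
    linarith [(hcn j).2]
end
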